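/- Let G be a locally compact group, H a closed subgroup, and K a compact subgroup of G such that for every k ∈ K the subgroup kHk⁻¹ ∩ H has finite index in both H and kHk⁻¹. Then there is an integer n such that |H : H ∩ kHk⁻¹| ≤ n and |H : H ∩ k⁻¹Hk| ≤ n for all k ∈ K. -/

import Mathlib

def conjS {G : Type*} [Group G] (g : G) (H : Subgroup G) : Subgroup G :=
  H.map (MulAut.conj g).toMonoidHom

section Aux

open Subgroup

variable {G : Type*} [Group G]

theorem mem_conjS {u x : G} {H : Subgroup G} : x ∈ conjS u H ↔ u⁻¹ * x * u ∈ H := by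
  constructor
  · rintro ⟨h, hh, rfl⟩
    simpa [MulAut.conj_apply, mul_assoc] using hh
  · intro hx
    exact ⟨u⁻¹ * x * u, hx, by simp [MulAut.conj_apply]; group⟩

theorem conjS_mul (u v : G) (H : Subgroup G) : conjS (u * v) H = conjS u (conjS v H) := by
  unfold conjS
  rw [Subgroup.map_map]
  congr 1
  ext x
  simp [MulAut.conj_apply, mul_assoc]

theorem conjS_inf (u : G) (A B : Subgroup G) :
    conjS u (A ⊓ B) = conjS u A ⊓ conjS u B :=
  Subgroup.map_inf A B _ (MulAut.conj u).injective

theorem relIndex_conjS (u : G) (A B : Subgroup G) :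
    (conjS u A).relIndex (conjS u B) = A.relIndex B := by
  have h1 : conjS u A = Subgroup.comap ((MulAut.conj u).symm.toMonoidHom) A :=
    Subgroup.map_equiv_eq_comap_symm' _ _
  rw [h1, Subgroup.relIndex_comap]
  congr 1
  unfold conjS
  rw [Subgroup.map_map]
  have : ((MulAut.conj u).symm.toMonoidHom.comp (MulAut.conj u).toMonoidHom) = MonoidHom.id G := by
    ext x; simp
  rw [this, Subgroup.map_id]

noncomputable def rIdx (H : Subgroup G) (u : G) : ℕ := (H ⊓ conjS u H).relIndex H

theorem rIdx_mul_le (H : Subgroup G) {u v : G} (hu : rIdx H u ≠ 0) (hv : rIdx H v ≠ 0) :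
    rIdx H (u * v) ≤ rIdx H u * rIdx H v := by
  set A := H ⊓ conjS u H with hA
  set D := conjS u (H ⊓ conjS v H) with hDdef
  have hD : D = conjS u H ⊓ conjS (u * v) H := by
    rw [hDdef, conjS_inf, conjS_mul]
  set C := A ⊓ D with hC
  have hCle : C ≤ H ⊓ conjS (u * v) H := by
    rw [hC, hD, hA]
    exact le_inf (inf_le_left.trans inf_le_left) (inf_le_right.trans inf_le_right)
  have hDrel : D.relIndex (conjS u H) = rIdx H v := by
    rw [hDdef, relIndex_conjS, rIdx, Subgroup.inf_relIndex_left,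
      ← Subgroup.inf_relIndex_left H (conjS v H)]
  have hDne : D.relIndex (conjS u H) ≠ 0 := by rw [hDrel]; exact hv
  have hDAne : D.relIndex A ≠ 0 :=
    fun h0 => hDne (Subgroup.relIndex_eq_zero_of_le_right (inf_le_right : A ≤ conjS u H) h0)
  have hDA_le : D.relIndex A ≤ rIdx H v := by
    rw [← hDrel]
    exact Subgroup.relIndex_le_of_le_right (inf_le_right : A ≤ conjS u H) hDne
  have hCA : C.relIndex A = D.relIndex A := by
    rw [hC, inf_comm, Subgroup.inf_relIndex_right]
  have hkey : C.relIndex A * A.relIndex H = C.relIndex H :=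
    Subgroup.relIndex_mul_relIndex C A H inf_le_left inf_le_left
  have hArel : A.relIndex H = rIdx H u := rfl
  have hCH_ne : C.relIndex H ≠ 0 := by
    rw [← hkey, hCA]
    exact mul_ne_zero hDAne (by rw [hArel]; exact hu)
  have hCH_le : C.relIndex H ≤ rIdx H v * rIdx H u := by
    rw [← hkey, hCA, hArel]
    exact Nat.mul_le_mul_right _ hDA_le
  calc rIdx H (u * v) ≤ C.relIndex H := Subgroup.relIndex_le_of_le_left hCle hCH_ne
    _ ≤ rIdx H v * rIdx H u := hCH_le
    _ = rIdx H u * rIdx H v := mul_comm _ _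

theorem rIdx_le_iff (H : Subgroup G) (u : G) (n : ℕ) :
    (rIdx H u ≤ n ∧ rIdx H u ≠ 0) ↔
      ∀ f : Fin (n + 1) → H, ∃ i j, i ≠ j ∧ u⁻¹ * ((f i : G)⁻¹ * (f j : G)) * u ∈ H := by
  classical
  set J : Subgroup H := (H ⊓ conjS u H).subgroupOf H with hJ
  have hmem : ∀ a b : H, (a⁻¹ * b ∈ J ↔ u⁻¹ * ((a : G)⁻¹ * (b : G)) * u ∈ H) := by
    intro a b
    rw [hJ, Subgroup.mem_subgroupOf]
    simp only [Subgroup.mem_inf]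
    constructor
    · rintro ⟨-, h2⟩
      exact mem_conjS.mp h2
    · intro h
      exact ⟨by push_cast; exact mul_mem (inv_mem a.2) b.2, mem_conjS.mpr h⟩
  have hridx : rIdx H u = Nat.card (H ⧸ J) := rfl
  constructor
  · rintro ⟨hle, hne⟩ f
    have hfin : Finite (H ⧸ J) := (Nat.card_ne_zero.mp (hridx ▸ hne)).2
    haveI := Fintype.ofFinite (H ⧸ J)
    have hcard : Fintype.card (H ⧸ J) < Fintype.card (Fin (n + 1)) := by
      rw [Fintype.card_fin, ← Nat.card_eq_fintype_card]
      omega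
    obtain ⟨i, j, hij, hfe⟩ :=
      Fintype.exists_ne_map_eq_of_card_lt (fun i => ((f i : H) : H ⧸ J)) hcard
    exact ⟨i, j, hij, (hmem (f i) (f j)).mp (QuotientGroup.eq.mp hfe)⟩
  · intro hf
    have hfin : Finite (H ⧸ J) := by
      by_contra hinf
      rw [not_finite_iff_infinite] at hinf
      obtain ⟨i, j, hij, h⟩ := hf fun i => ((hinf.natEmbedding (H ⧸ J)) i.1).out
      have := QuotientGroup.eq.mpr ((hmem _ _).mpr h)
      rw [QuotientGroup.out_eq', QuotientGroup.out_eq'] at this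
      exact hij (Fin.ext ((hinf.natEmbedding (H ⧸ J)).injective this))
    have hle : Nat.card (H ⧸ J) ≤ n := by
      by_contra hgt
      push_neg at hgt
      haveI := Fintype.ofFinite (H ⧸ J)
      rw [Nat.card_eq_fintype_card] at hgt
      obtain ⟨e⟩ : Nonempty (Fin (n + 1) ↪ H ⧸ J) :=
        Function.Embedding.nonempty_iff_card_le.mpr (by simpa using hgt)
      obtain ⟨i, j, hij, h⟩ := hf fun i => (e i).out
      have := QuotientGroup.eq.mpr ((hmem _ _).mpr h)
      rw [QuotientGroup.out_eq', QuotientGroup.out_eq'] at this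
      exact hij (e.injective this)
    have hne : Nat.card (H ⧸ J) ≠ 0 :=
      Nat.card_ne_zero.mpr ⟨⟨QuotientGroup.mk 1⟩, hfin⟩
    exact ⟨hridx ▸ hle, hridx ▸ hne⟩

end Aux

theorem stmt_5 {G : Type*} [Group G] [TopologicalSpace G] [IsTopologicalGroup G]
    [LocallyCompactSpace G] [T2Space G]
    (H K : Subgroup G) (hH : IsClosed (H : Set G)) (hK : IsCompact (K : Set G))
    (hcomm : ∀ k ∈ K, (conjS k H ⊓ H).relIndex H ≠ 0 ∧
      (conjS k H ⊓ H).relIndex (conjS k H) ≠ 0) :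
    ∃ n : ℕ, ∀ k ∈ K,
      (H ⊓ conjS k H).relIndex H ≤ n ∧ (H ⊓ conjS k⁻¹ H).relIndex H ≤ n := by
  classical
  have hfin : ∀ k ∈ K, rIdx H k ≠ 0 := by
    intro k hk
    have h := (hcomm k hk).1
    rw [inf_comm] at h
    exact h
  set Ω : ℕ → Set G := fun m => {u | ∀ f : Fin (m + 1) → H,
      (∃ i j, i ≠ j ∧ u⁻¹ * ((f i : G)⁻¹ * (f j : G)) * u ∈ H) ∧
      (∃ i j, i ≠ j ∧ u * ((f i : G)⁻¹ * (f j : G)) * u⁻¹ ∈ H)} with hΩdef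
  have hΩ_iff : ∀ (m : ℕ) (u : G), u ∈ Ω m ↔
      ((rIdx H u ≤ m ∧ rIdx H u ≠ 0) ∧ (rIdx H u⁻¹ ≤ m ∧ rIdx H u⁻¹ ≠ 0)) := by
    intro m u
    rw [hΩdef, rIdx_le_iff H u m, rIdx_le_iff H u⁻¹ m]
    simp only [Set.mem_setOf_eq, inv_inv]
    exact ⟨fun h => ⟨fun f => (h f).1, fun f => (h f).2⟩, fun h f => ⟨h.1 f, h.2 f⟩⟩
  have hΩclosed : ∀ m, IsClosed (Ω m) := by
    intro m
    have heq : Ω m = ⋂ f : Fin (m + 1) → H,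
        ((⋃ i, ⋃ j, ⋃ _ : i ≠ j,
            (fun u : G => u⁻¹ * ((f i : G)⁻¹ * (f j : G)) * u) ⁻¹' (H : Set G)) ∩
         (⋃ i, ⋃ j, ⋃ _ : i ≠ j,
            (fun u : G => u * ((f i : G)⁻¹ * (f j : G)) * u⁻¹) ⁻¹' (H : Set G))) := by
      ext u
      simp only [hΩdef, Set.mem_setOf_eq, Set.mem_iInter, Set.mem_inter_iff, Set.mem_iUnion,
        Set.mem_preimage, SetLike.mem_coe, exists_prop]
    rw [heq]
    refine isClosed_iInter fun f => IsClosed.inter ?_ ?_ <;>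
      exact isClosed_iUnion_of_finite fun i => isClosed_iUnion_of_finite fun j =>
        isClosed_iUnion_of_finite fun _ => hH.preimage (by fun_prop)
  haveI : CompactSpace (↥K) := isCompact_iff_compactSpace.mp hK
  haveI : LocallyCompactSpace (↥K) := hK.isClosed.locallyCompactSpace
  haveI : Nonempty (↥K) := ⟨1⟩
  set S : ℕ → Set (↥K) := fun m => Subtype.val ⁻¹' Ω m with hSdef
  have hSclosed : ∀ m, IsClosed (S m) := fun m => (hΩclosed m).preimage continuous_subtype_val
  have hSunion : ⋃ m, S m = Set.univ := by
    ext k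
    simp only [Set.mem_iUnion, Set.mem_univ, iff_true]
    refine ⟨max (rIdx H ↑k) (rIdx H (↑k)⁻¹), ?_⟩
    show (k : G) ∈ Ω _
    rw [hΩ_iff]
    exact ⟨⟨le_max_left _ _, hfin _ k.2⟩,
      ⟨le_max_right _ _, hfin _ (K.inv_mem k.2)⟩⟩
  obtain ⟨n, u₀, hu₀⟩ := nonempty_interior_of_iUnion_of_closed hSclosed hSunion
  set U : ↥K → Set ↥K := fun k => (Homeomorph.mulLeft (k * u₀⁻¹)) '' interior (S n) with hUdef
  have hUopen : ∀ k, IsOpen (U k) := fun k =>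
    (Homeomorph.mulLeft (k * u₀⁻¹)).isOpenMap _ isOpen_interior
  have hUcover : (Set.univ : Set ↥K) ⊆ ⋃ k, U k := by
    intro k _
    refine Set.mem_iUnion.mpr ⟨k, ⟨u₀, hu₀, ?_⟩⟩
    show k * u₀⁻¹ * u₀ = k
    exact inv_mul_cancel_right k u₀
  obtain ⟨t, ht⟩ := isCompact_univ.elim_finite_subcover U hUopen hUcover
  refine ⟨t.sup (fun i => max (rIdx H ((i * u₀⁻¹ : ↥K) : G) * n)
      (n * rIdx H (((i * u₀⁻¹ : ↥K) : G))⁻¹)), fun k hk => ?_⟩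
  have hk' : (⟨k, hk⟩ : ↥K) ∈ ⋃ i ∈ t, U i := ht (Set.mem_univ _)
  simp only [Set.mem_iUnion] at hk'
  obtain ⟨i, hit, w, hw, hwk⟩ := hk'
  have hwS : w ∈ S n := interior_subset hw
  have hwΩ := (hΩ_iff n ↑w).mp hwS
  set a : G := ((i * u₀⁻¹ : ↥K) : G) with hadef
  have haK : a ∈ K := (i * u₀⁻¹ : ↥K).2
  have hka : a * (w : G) = k := congrArg Subtype.val hwk
  have h1 : rIdx H k ≤ t.sup (fun i => max (rIdx H ((i * u₀⁻¹ : ↥K) : G) * n)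
      (n * rIdx H (((i * u₀⁻¹ : ↥K) : G))⁻¹)) := by
    rw [← hka]
    calc rIdx H (a * ↑w) ≤ rIdx H a * rIdx H ↑w := rIdx_mul_le H (hfin a haK) hwΩ.1.2
      _ ≤ rIdx H a * n := Nat.mul_le_mul_left _ hwΩ.1.1
      _ ≤ _ := le_trans (le_max_left _ _) (Finset.le_sup (f := fun i => max (rIdx H ((i * u₀⁻¹ : ↥K) : G) * n) (n * rIdx H (((i * u₀⁻¹ : ↥K) : G))⁻¹)) hit)
  have h2 : rIdx H k⁻¹ ≤ t.sup (fun i => max (rIdx H ((i * u₀⁻¹ : ↥K) : G) * n)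
      (n * rIdx H (((i * u₀⁻¹ : ↥K) : G))⁻¹)) := by
    have hk_inv : k⁻¹ = (↑w : G)⁻¹ * a⁻¹ := by rw [← hka, mul_inv_rev]
    rw [hk_inv]
    calc rIdx H ((↑w : G)⁻¹ * a⁻¹) ≤ rIdx H (↑w : G)⁻¹ * rIdx H a⁻¹ :=
        rIdx_mul_le H hwΩ.2.2 (hfin a⁻¹ (K.inv_mem haK))
      _ ≤ n * rIdx H a⁻¹ := Nat.mul_le_mul_right _ hwΩ.2.1
      _ ≤ _ := le_trans (le_max_right _ _) (Finset.le_sup (f := fun i => max (rIdx H ((i * u₀⁻¹ : ↥K) : G) * n) (n * rIdx H (((i * u₀⁻¹ : ↥K) : G))⁻¹)) hit)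
  exact ⟨h1, h2⟩
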